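/- Let (v_1,…,v_n) be an arbitrary valuation profile with m > n and 1 < m|_n ≤ n−2. Suppose that: m|_n of the agents have valuation functions that are both ⟨⌊m/n⌋, ⌊m/n⌋+1⟩-size monotonic and ⟨⌊m/n⌋−1, ⌊m/n⌋⟩-set monotonic; a different (disjoint) set of n−1−m|_n agents have ⟨⌊m/n⌋−1, ⌊m/n⌋⟩-size monotonic valuation functions; and the remaining agent has a ⟨⌊m/n⌋−1, ⌊m/n⌋⟩-set monotonic valuation function. Then an EFX allocation exists at (v_1,…,v_n). -/

import Mathlib

open Finset

/-- A valuation `v` on subsets of `E` is set monotonic if larger sets (by inclusion)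
have larger value. -/
def SetMonotonic {α : Type*} (E : Finset α) (v : Finset α → ℝ) : Prop :=
  ∀ X Y : Finset α, X ⊆ Y → Y ⊆ E → v X ≤ v Y

/-- `⟨k,l⟩`-set monotonicity: monotone along inclusions whose cardinalities lie in `[k,l]`. -/
def SetMonotonicKL {α : Type*} (E : Finset α) (k l : ℕ) (v : Finset α → ℝ) : Prop :=
  ∀ X Y : Finset α, X ⊆ Y → Y ⊆ E → k ≤ X.card → X.card < Y.card → Y.card ≤ l → v X ≤ v Y

/-- `⟨k,l⟩`-size monotonicity: any set of strictly larger cardinality (within `[k,l]`)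
has larger value. -/
def SizeMonotonic {α : Type*} (E : Finset α) (k l : ℕ) (v : Finset α → ℝ) : Prop :=
  ∀ X Y : Finset α, X ⊆ E → Y ⊆ E → X ≠ Y →
    k ≤ X.card → X.card < Y.card → Y.card ≤ l → v X ≤ v Y

/-- An allocation of the goods `E` among `n` agents: pairwise disjoint bundles
whose union is `E`. -/
def IsAllocation {α : Type*} [DecidableEq α] (E : Finset α) {n : ℕ}
    (X : Fin n → Finset α) : Prop :=
  (∀ i, X i ⊆ E) ∧ (∀ i j : Fin n, i ≠ j → Disjoint (X i) (X j)) ∧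
    Finset.univ.biUnion X = E

/-- `X E_v Y` : `X` is envy-free from `Y` up to any one item at valuation `v`. -/
def EFXpref {α : Type*} [DecidableEq α] (v : Finset α → ℝ) (X Y : Finset α) : Prop :=
  ∀ y ∈ Y, v (Y.erase y) ≤ v X

/-- An allocation is EFX at a profile `v` if every agent is envy-free up to any one good
from every other agent's bundle. -/
def IsEFX {α : Type*} [DecidableEq α] {n : ℕ} (v : Fin n → Finset α → ℝ)
    (X : Fin n → Finset α) : Prop :=
  ∀ i j : Fin n, EFXpref (v i) (X i) (X j)

set_option linter.unusedSectionVars false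

open Finset

section Greedy
variable {α : Type*} [DecidableEq α]

noncomputable def bestSubset (v : Finset α → ℝ) (P : Finset α) (q : ℕ) : Finset α :=
  if h : (P.powersetCard q).Nonempty then (Finset.exists_max_image _ v h).choose else ∅

lemma bestSubset_subset (v : Finset α → ℝ) (P : Finset α) (q : ℕ) :
    bestSubset v P q ⊆ P := by
  unfold bestSubset
  split_ifs with h
  · have := (Finset.exists_max_image _ v h).choose_spec.1
    exact (Finset.mem_powersetCard.mp this).1
  · simp

lemma bestSubset_card (v : Finset α → ℝ) {P : Finset α} {q : ℕ} (h : q ≤ P.card) :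
    (bestSubset v P q).card = q := by
  have hne : (P.powersetCard q).Nonempty := Finset.powersetCard_nonempty.mpr h
  unfold bestSubset
  rw [dif_pos hne]
  exact (Finset.mem_powersetCard.mp (Finset.exists_max_image _ v hne).choose_spec.1).2

lemma bestSubset_max (v : Finset α → ℝ) {P : Finset α} {q : ℕ} (h : q ≤ P.card)
    {Z : Finset α} (hZ : Z ⊆ P) (hZc : Z.card = q) : v Z ≤ v (bestSubset v P q) := by
  have hne : (P.powersetCard q).Nonempty := Finset.powersetCard_nonempty.mpr h
  unfold bestSubset
  rw [dif_pos hne]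
  exact (Finset.exists_max_image _ v hne).choose_spec.2 Z
    (Finset.mem_powersetCard.mpr ⟨hZ, hZc⟩)

noncomputable def greedy (w : ℕ → Finset α → ℝ) (sz : ℕ → ℕ) (E : Finset α) : ℕ → Finset α
  | k => bestSubset (w k)
      (E \ (Finset.range k).attach.biUnion (fun j => greedy w sz E j.1)) (sz k)
  termination_by k => k
  decreasing_by exact Finset.mem_range.mp j.2

noncomputable def gPrev (w : ℕ → Finset α → ℝ) (sz : ℕ → ℕ) (E : Finset α) (k : ℕ) : Finset α :=
  (Finset.range k).biUnion (greedy w sz E)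

variable (w : ℕ → Finset α → ℝ) (sz : ℕ → ℕ) (E : Finset α)

lemma greedy_eq (k : ℕ) :
    greedy w sz E k = bestSubset (w k) (E \ gPrev w sz E k) (sz k) := by
  rw [greedy]
  congr 1
  unfold gPrev
  congr 1
  ext x
  simp

lemma greedy_subsetPool (k : ℕ) : greedy w sz E k ⊆ E \ gPrev w sz E k := by
  rw [greedy_eq]; exact bestSubset_subset _ _ _

lemma greedy_subsetE (k : ℕ) : greedy w sz E k ⊆ E :=
  (greedy_subsetPool w sz E k).trans (sdiff_subset)

lemma gPrev_subsetE (k : ℕ) : gPrev w sz E k ⊆ E := by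
  apply Finset.biUnion_subset.mpr
  intro j _
  exact greedy_subsetE w sz E j

lemma gPrev_mono {j k : ℕ} (h : j ≤ k) : gPrev w sz E j ⊆ gPrev w sz E k :=
  Finset.biUnion_subset_biUnion_of_subset_left _ (Finset.range_subset_range.mpr h)

lemma greedy_subset_gPrev {j k : ℕ} (h : j < k) : greedy w sz E j ⊆ gPrev w sz E k :=
  Finset.subset_biUnion_of_mem _ (Finset.mem_range.mpr h)

lemma greedy_disj {j k : ℕ} (h : j < k) :
    Disjoint (greedy w sz E j) (greedy w sz E k) := by
  have h1 : greedy w sz E k ⊆ E \ gPrev w sz E k := greedy_subsetPool w sz E k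
  have h2 : greedy w sz E j ⊆ gPrev w sz E k := greedy_subset_gPrev w sz E h
  exact Finset.disjoint_sdiff.mono h2 h1

lemma gPrev_card {k : ℕ} (H : ∀ j < k, (greedy w sz E j).card = sz j) :
    (gPrev w sz E k).card = ∑ j ∈ Finset.range k, sz j := by
  unfold gPrev
  rw [Finset.card_biUnion]
  · exact Finset.sum_congr rfl (fun j hj => H j (Finset.mem_range.mp hj))
  · intro a _ b _ hab
    rcases lt_or_gt_of_ne hab with h | h
    · exact greedy_disj w sz E h
    · exact (greedy_disj w sz E h).symm

lemma greedy_all {N : ℕ} (hsum : ∀ k < N, ∑ j ∈ Finset.range (k + 1), sz j ≤ E.card) :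
    ∀ k < N, sz k ≤ (E \ gPrev w sz E k).card ∧ (greedy w sz E k).card = sz k := by
  intro k
  induction k using Nat.strong_induction_on with
  | _ k ih =>
    intro hk
    have hcard : (gPrev w sz E k).card = ∑ j ∈ Finset.range k, sz j :=
      gPrev_card w sz E (fun j hj => (ih j hj (hj.trans hk)).2)
    have hpool : (E \ gPrev w sz E k).card = E.card - ∑ j ∈ Finset.range k, sz j := by
      rw [Finset.card_sdiff_of_subset (gPrev_subsetE w sz E k), hcard]
    have hs := hsum k hk
    rw [Finset.sum_range_succ] at hs
    have h1 : sz k ≤ (E \ gPrev w sz E k).card := by omega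
    exact ⟨h1, by rw [greedy_eq]; exact bestSubset_card _ h1⟩

end Greedy

/-- Theorem 4(ii): arbitrary valuation profile, `m > n`, `1 < m mod n ≤ n-2`.
If `m mod n` agents have valuations that are both `⟨⌊m/n⌋, ⌊m/n⌋+1⟩`-size monotonic and
`⟨⌊m/n⌋-1, ⌊m/n⌋⟩`-set monotonic, a disjoint set of `n - 1 - m mod n` agents have
`⟨⌊m/n⌋-1, ⌊m/n⌋⟩`-size monotonic valuations, and the remaining agent has a
`⟨⌊m/n⌋-1, ⌊m/n⌋⟩`-set monotonic valuation, then an EFX allocation exists. -/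
theorem efx_exists_relaxed_ii {α : Type*} [DecidableEq α] (n m : ℕ)
    (hn : 2 ≤ n) (E : Finset α) (hE : E.card = m) (hmn : n < m)
    (hr1 : 1 < m % n) (hr2 : m % n ≤ n - 2)
    (v : Fin n → Finset α → ℝ)
    (A B : Finset (Fin n)) (hAB : Disjoint A B)
    (hAcard : A.card = m % n) (hBcard : B.card = n - 1 - m % n)
    (hA : ∀ i ∈ A, SizeMonotonic E (m / n) (m / n + 1) (v i) ∧
      SetMonotonicKL E (m / n - 1) (m / n) (v i))
    (hB : ∀ i ∈ B, SizeMonotonic E (m / n - 1) (m / n) (v i))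
    (hrest : ∀ i : Fin n, i ∉ A ∪ B → SetMonotonicKL E (m / n - 1) (m / n) (v i)) :
    ∃ X : Fin n → Finset α, IsAllocation E X ∧ IsEFX v X := by
  classical
  set q := m / n with hq
  set r := m % n with hr
  have hn0 : 0 < n := by omega
  have hrn : r < n := Nat.mod_lt _ hn0
  have hq1 : 1 ≤ q := (Nat.one_le_div_iff hn0).mpr (le_of_lt hmn)
  have hm : n * q + r = m := Nat.div_add_mod m n
  -- find the remaining agent c
  have hABcard : (A ∪ B).card = n - 1 := by
    rw [Finset.card_union_of_disjoint hAB, hAcard, hBcard]; omega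
  obtain ⟨c, hc⟩ : ∃ c : Fin n, c ∉ A ∪ B := by
    by_contra h
    push_neg at h
    have : (A ∪ B) = Finset.univ := Finset.eq_univ_iff_forall.mpr h
    rw [this, Finset.card_univ, Fintype.card_fin] at hABcard
    omega
  have hcA : c ∉ A := fun h => hc (Finset.mem_union_left _ h)
  have hcB : c ∉ B := fun h => hc (Finset.mem_union_right _ h)
  -- the picking order
  set L : List (Fin n) := c :: (B.toList ++ A.toList) with hL
  have hBlen : B.toList.length = n - 1 - r := by rw [Finset.length_toList, hBcard]
  have hAlen : A.toList.length = r := by rw [Finset.length_toList, hAcard]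
  have hLlen : L.length = n := by
    simp only [hL, List.length_cons, List.length_append, hBlen, hAlen]
    omega
  have hLnd : L.Nodup := by
    refine List.nodup_cons.mpr ⟨?_, List.Nodup.append B.nodup_toList A.nodup_toList ?_⟩
    · intro h
      rcases List.mem_append.mp h with h | h
      · exact hcB (Finset.mem_toList.mp h)
      · exact hcA (Finset.mem_toList.mp h)
    · intro x hx hx'
      exact Finset.disjoint_right.mp hAB (Finset.mem_toList.mp hx) (Finset.mem_toList.mp hx')
  have hLall : ∀ i : Fin n, i ∈ L := by
    have h1 : L.toFinset = Finset.univ := by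
      apply Finset.eq_univ_of_card
      rw [List.toFinset_card_of_nodup hLnd, hLlen, Fintype.card_fin]
    intro i
    rw [← List.mem_toFinset, h1]
    exact Finset.mem_univ i
  set idx : Fin n → ℕ := fun i => L.idxOf i with hidxdef
  have hidxlt : ∀ i, idx i < n := fun i => hLlen ▸ List.idxOf_lt_length_iff.mpr (hLall i)
  have hidxinj : ∀ i j, idx i = idx j → i = j := fun i j h =>
    (List.idxOf_inj (hLall i)).mp h
  have hgetd : ∀ i, L.getD (idx i) c = i := by
    intro i
    have h : idx i < L.length := by rw [hLlen]; exact hidxlt i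
    rw [List.getD_eq_getElem _ _ h]
    exact List.getElem_idxOf h
  have hidxA : ∀ i ∈ A, n - r ≤ idx i := by
    intro i hiA
    have hic : i ≠ c := fun h => hcA (h ▸ hiA)
    have hiB : i ∉ B.toList := fun h => Finset.disjoint_left.mp hAB hiA (Finset.mem_toList.mp h)
    show n - r ≤ L.idxOf i
    rw [hL, List.idxOf_cons_ne _ (Ne.symm hic), List.idxOf_append_of_notMem hiB, hBlen]
    omega
  have hidxnA : ∀ i, i ∉ A → idx i < n - r := by
    intro i hiA
    show L.idxOf i < n - r
    by_cases hic : i = c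
    · subst hic
      rw [hL, List.idxOf_cons_self]
      omega
    · have hiB : i ∈ B.toList := by
        have := hLall i
        rw [hL] at this
        rcases List.mem_cons.mp this with h | h
        · exact absurd h hic
        · rcases List.mem_append.mp h with h | h
          · exact h
          · exact absurd (Finset.mem_toList.mp h) hiA
      rw [hL, List.idxOf_cons_ne _ (Ne.symm hic), List.idxOf_append_of_mem hiB]
      have := List.idxOf_lt_length_iff.mpr hiB
      rw [hBlen] at this
      omega
  -- sizes and valuations indexed by position
  set sz : ℕ → ℕ := fun k => if k < n - r then q else q + 1 with hszdef
  set w : ℕ → Finset α → ℝ := fun k => v (L.getD k c) with hwdef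
  have hwidx : ∀ i, w (idx i) = v i := fun i => by rw [hwdef]; simp only [hgetd i]
  have hszA : ∀ j ∈ A, sz (idx j) = q + 1 := by
    intro j hj
    simp only [hszdef, if_neg (Nat.not_lt.mpr (hidxA j hj))]
  have hsznA : ∀ j, j ∉ A → sz (idx j) = q := by
    intro j hj
    simp only [hszdef, if_pos (hidxnA j hj)]
  -- sum of sizes
  have hsum : ∀ N : ℕ, ∑ j ∈ Finset.range N, sz j = N * q + (N - (n - r)) := by
    intro N
    induction N with
    | zero => simp
    | succ N ih =>
      rw [Finset.sum_range_succ, ih, hszdef]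
      by_cases h : N < n - r
      · simp only [if_pos h, Nat.succ_mul]
        omega
      · simp only [if_neg h, Nat.succ_mul]
        omega
  have hsumle : ∀ k < n, ∑ j ∈ Finset.range (k + 1), sz j ≤ E.card := by
    intro k hk
    rw [hsum, hE]
    have h1 : (k + 1) * q ≤ n * q := Nat.mul_le_mul_right q (by omega)
    omega
  -- the allocation
  set Xf : Fin n → Finset α := fun i => greedy w sz E (idx i) with hXf
  have hall := greedy_all w sz E hsumle
  have hXcard : ∀ i, (Xf i).card = sz (idx i) := fun i => (hall _ (hidxlt i)).2
  have hXpool : ∀ i, Xf i ⊆ E \ gPrev w sz E (idx i) := fun i => greedy_subsetPool w sz E _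
  have hXE : ∀ i, Xf i ⊆ E := fun i => (hXpool i).trans Finset.sdiff_subset
  have hXmax : ∀ i, ∀ Z ⊆ E \ gPrev w sz E (idx i), Z.card = sz (idx i) →
      v i Z ≤ v i (Xf i) := by
    intro i Z hZ hZc
    rw [← hwidx i, hXf]
    show w (idx i) Z ≤ w (idx i) (greedy w sz E (idx i))
    rw [greedy_eq w sz E (idx i)]
    exact bestSubset_max _ (hall _ (hidxlt i)).1 hZ hZc
  have hdisj : ∀ i j : Fin n, i ≠ j → Disjoint (Xf i) (Xf j) := by
    intro i j hij
    have h : idx i ≠ idx j := fun h => hij (hidxinj i j h)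
    rcases lt_or_gt_of_ne h with h | h
    · exact greedy_disj w sz E h
    · exact (greedy_disj w sz E h).symm
  have hUnion : Finset.univ.biUnion Xf = E := by
    have himg : Finset.univ.image idx = Finset.range n := by
      apply Finset.eq_of_subset_of_card_le
      · intro x hx
        obtain ⟨i, _, rfl⟩ := Finset.mem_image.mp hx
        exact Finset.mem_range.mpr (hidxlt i)
      · rw [Finset.card_range, Finset.card_image_of_injective _ (fun a b hab => hidxinj a b hab),
          Finset.card_univ, Fintype.card_fin]
    have h1 : Finset.univ.biUnion Xf = gPrev w sz E n := by
      rw [gPrev, ← himg, Finset.image_biUnion]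
    rw [h1]
    apply Finset.eq_of_subset_of_card_le (gPrev_subsetE w sz E n)
    rw [hE, gPrev_card w sz E (fun k hk => (hall k hk).2), hsum]
    have : n - (n - r) = r := by omega
    omega
  refine ⟨Xf, ⟨hXE, hdisj, hUnion⟩, ?_⟩
  -- EFX property
  intro i j y hy
  set W := (Xf j).erase y with hW
  have hWsub : W ⊆ Xf j := Finset.erase_subset _ _
  have hWE : W ⊆ E := hWsub.trans (hXE j)
  have hWcard : W.card = sz (idx j) - 1 := by
    rw [hW, Finset.card_erase_of_mem hy, hXcard]
  by_cases hiA : i ∈ A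
  · -- agent i in A: bundle of size q+1
    have hszi : sz (idx i) = q + 1 := hszA i hiA
    obtain ⟨hsizeM, hsetM⟩ := hA i hiA
    by_cases hjA : j ∈ A
    · have hWc : W.card = q := by rw [hWcard, hszA j hjA]; omega
      have hWne : W ≠ Xf i := by
        intro he
        have h1 := hXcard i
        rw [← he, hWc, hszi] at h1
        omega
      exact hsizeM W (Xf i) hWE (hXE i) hWne (le_of_eq hWc.symm)
        (by rw [hWc, hXcard i, hszi]; omega) (by rw [hXcard i, hszi])
    · have hYc : (Xf j).card = q := by rw [hXcard, hsznA j hjA]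
      have hWc : W.card = q - 1 := by rw [hWcard, hsznA j hjA]
      have step1 : v i W ≤ v i (Xf j) :=
        hsetM W (Xf j) hWsub (hXE j) (le_of_eq hWc.symm) (by omega) (le_of_eq hYc)
      have hne : Xf j ≠ Xf i := by
        intro he
        have h1 := hXcard i
        rw [← he, hYc, hszi] at h1
        omega
      have step2 : v i (Xf j) ≤ v i (Xf i) :=
        hsizeM (Xf j) (Xf i) (hXE j) (hXE i) hne (le_of_eq hYc.symm)
          (by rw [hYc, hXcard i, hszi]; omega) (by rw [hXcard i, hszi])
      linarith
  · have hszi : sz (idx i) = q := hsznA i hiA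
    by_cases hiB : i ∈ B
    · -- agent i in B
      have hsize := hB i hiB
      by_cases hjA : j ∈ A
      · -- big bundle picked later: use the argmax property
        have hij : idx i < idx j := lt_of_lt_of_le (hidxnA i hiA) (hidxA j hjA)
        have hWpool : W ⊆ E \ gPrev w sz E (idx i) := by
          refine hWsub.trans ((hXpool j).trans ?_)
          exact Finset.sdiff_subset_sdiff (Finset.Subset.refl E)
            (gPrev_mono w sz E (le_of_lt hij))
        exact hXmax i W hWpool (by rw [hWcard, hszA j hjA, hszi]; omega)
      · have hWc : W.card = q - 1 := by rw [hWcard, hsznA j hjA]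
        have hWne : W ≠ Xf i := by
          intro he
          have h1 := hXcard i
          rw [← he, hWc, hszi] at h1
          omega
        exact hsize W (Xf i) hWE (hXE i) hWne (le_of_eq hWc.symm)
          (by rw [hWc, hXcard i, hszi]; omega) (by rw [hXcard i, hszi])
    · -- the remaining agent: i = c, picks first, global argmax
      have hsetM := hrest i (by simp [hiA, hiB])
      have hic : i = c := by
        have := hLall i
        rw [hL] at this
        rcases List.mem_cons.mp this with h | h
        · exact h
        · rcases List.mem_append.mp h with h | h
          · exact absurd (Finset.mem_toList.mp h) hiB
          · exact absurd (Finset.mem_toList.mp h) hiA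
      have hidx0 : idx i = 0 := by
        show L.idxOf i = 0
        rw [hic, hL, List.idxOf_cons_self]
      have hpool0 : E \ gPrev w sz E (idx i) = E := by
        rw [hidx0, gPrev]
        simp
      by_cases hjA : j ∈ A
      · refine hXmax i W (by rw [hpool0]; exact hWE) ?_
        rw [hWcard, hszA j hjA, hszi]
        exact Nat.succ_sub_one q
      · have hWc : W.card = q - 1 := by rw [hWcard, hsznA j hjA]
        have hqm : q ≤ E.card := by rw [hE]; exact Nat.div_le_self m n
        obtain ⟨Z, hWZ, hZE, hZc⟩ :=
          Finset.exists_subsuperset_card_eq hWE (by rw [hWc]; exact Nat.sub_le q 1 : W.card ≤ q) hqm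
        have step1 : v i W ≤ v i Z :=
          hsetM W Z hWZ hZE (le_of_eq hWc.symm) (by omega) (le_of_eq hZc)
        have step2 : v i Z ≤ v i (Xf i) := by
          refine hXmax i Z (by rw [hpool0]; exact hZE) ?_
          rw [hZc, hszi]
        linarith
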